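/- Let A : (0,∞) → ℝ be twice continuously differentiable with A''(y) + (y²/16) A(y) = (y/4) A(y)³ − (3/16) A(y)⁵ for all y > 0, and define E₃(y) = (1/2) A'(y)² + (y²/32) A(y)² − (y/16) A(y)⁴ + (1/32) A(y)⁶. Then for every y > 0 the function y ↦ E₃(y)/y² is differentiable with (d/dy)(E₃(y)/y²) = −A'(y)²/y³ + A(y)⁴/(16 y²) − A(y)⁶/(16 y³); in particular (d/dy)(E₃(y)/y²) ≤ A(y)⁴/(16 y²) for all y > 0. -/

import Mathlib

/-- For a C² solution of the amplitude equation
`A'' + (y²/16) A = (y/4) A³ − (3/16) A⁵` on `(0,∞)` and the modified energy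
`E₃ = (1/2) A'² + (y²/32) A² − (y/16) A⁴ + (1/32) A⁶`, the function `E₃/y²` has
derivative `−A'²/y³ + A⁴/(16y²) − A⁶/(16y³)` at each `y > 0`; in particular this
derivative is at most `A⁴/(16y²)`. -/
theorem stmt_13 (A : ℝ → ℝ) (hA : ContDiffOn ℝ 2 A (Set.Ioi (0 : ℝ)))
    (hODE : ∀ y : ℝ, 0 < y →
      deriv (deriv A) y + y ^ 2 / 16 * A y = y / 4 * A y ^ 3 - 3 / 16 * A y ^ 5) :
    ∀ y : ℝ, 0 < y →
      HasDerivAt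
        (fun z : ℝ =>
          (1 / 2 * deriv A z ^ 2 + z ^ 2 / 32 * A z ^ 2 - z / 16 * A z ^ 4
            + 1 / 32 * A z ^ 6) / z ^ 2)
        (-(deriv A y ^ 2) / y ^ 3 + A y ^ 4 / (16 * y ^ 2) - A y ^ 6 / (16 * y ^ 3)) y ∧
      -(deriv A y ^ 2) / y ^ 3 + A y ^ 4 / (16 * y ^ 2) - A y ^ 6 / (16 * y ^ 3)
        ≤ A y ^ 4 / (16 * y ^ 2) := by
  intro y hy
  have hopen : IsOpen (Set.Ioi (0 : ℝ)) := isOpen_Ioi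
  have hmem : Set.Ioi (0 : ℝ) ∈ nhds y := hopen.mem_nhds hy
  have hA' : ContDiffOn ℝ 1 (deriv A) (Set.Ioi (0 : ℝ)) := by
    have := hA.deriv_of_isOpen (m := 1) hopen (by norm_num)
    simpa using this
  have h1 : HasDerivAt A (deriv A y) y := by
    have : DifferentiableAt ℝ A y :=
      ((hA.contDiffAt hmem).differentiableAt (by norm_num))
    exact this.hasDerivAt
  have h2 : HasDerivAt (deriv A) (deriv (deriv A) y) y := by
    have : DifferentiableAt ℝ (deriv A) y :=
      ((hA'.contDiffAt hmem).differentiableAt (by norm_num))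
    exact this.hasDerivAt
  set a := A y
  set a' := deriv A y
  set a'' := deriv (deriv A) y
  have hODEy : a'' = y / 4 * a ^ 3 - 3 / 16 * a ^ 5 - y ^ 2 / 16 * a := by
    have := hODE y hy
    simp only [a, a', a''] at *
    linarith
  -- numerator derivative
  have hN : HasDerivAt
      (fun z : ℝ => 1 / 2 * deriv A z ^ 2 + z ^ 2 / 32 * A z ^ 2 - z / 16 * A z ^ 4
        + 1 / 32 * A z ^ 6)
      (1 / 2 * (2 * a' ^ 1 * a'')
        + ((2 * y ^ 1 * 1) / 32 * a ^ 2 + y ^ 2 / 32 * (2 * a ^ 1 * a'))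
        - (1 / 16 * a ^ 4 + y / 16 * (4 * a ^ 3 * a'))
        + 1 / 32 * (6 * a ^ 5 * a')) y := by
    have t1 : HasDerivAt (fun z : ℝ => 1 / 2 * deriv A z ^ 2) (1 / 2 * (2 * a' ^ 1 * a'')) y :=
      (h2.pow 2).const_mul _
    have t2 : HasDerivAt (fun z : ℝ => z ^ 2 / 32 * A z ^ 2)
        ((2 * y ^ 1 * 1) / 32 * a ^ 2 + y ^ 2 / 32 * (2 * a ^ 1 * a')) y := by
      have hz : HasDerivAt (fun z : ℝ => z ^ 2 / 32) ((2 * y ^ 1 * 1) / 32) y :=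
        ((hasDerivAt_id y).pow 2).div_const 32
      exact hz.mul (h1.pow 2)
    have t3 : HasDerivAt (fun z : ℝ => z / 16 * A z ^ 4)
        (1 / 16 * a ^ 4 + y / 16 * (4 * a ^ 3 * a')) y := by
      have hz : HasDerivAt (fun z : ℝ => z / 16) (1 / 16) y := by
        simpa using (hasDerivAt_id y).div_const 16
      exact hz.mul (h1.pow 4)
    have t4 : HasDerivAt (fun z : ℝ => 1 / 32 * A z ^ 6) (1 / 32 * (6 * a ^ 5 * a')) y :=
      (h1.pow 6).const_mul _
    exact ((t1.add t2).sub t3).add t4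
  have hz2 : HasDerivAt (fun z : ℝ => z ^ 2) (2 * y ^ 1 * 1) y := (hasDerivAt_id y).pow 2
  have hy2 : (y : ℝ) ^ 2 ≠ 0 := pow_ne_zero 2 hy.ne'
  have hdiv := hN.div hz2 hy2
  constructor
  · refine HasDerivAt.congr_deriv hdiv ?_
    rw [hODEy]
    field_simp
    ring
  · have h1' : (0:ℝ) ≤ a' ^ 2 / y ^ 3 := by positivity
    have h2' : (0:ℝ) ≤ a ^ 6 / (16 * y ^ 3) := by positivity
    rw [neg_div]
    linarith
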